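/- arXiv:1412.6294 — 2 statements merged into one kernel-verified Lean document; each statement's English description precedes it below -/
import Mathlib

section
/- For every real number r with 0 < r < √3/2 there exists ε > 0 with ε ≤ (1−2δ_r)/π and r + ε < √3/2 such that for all s with r < s ≤ r + ε one has (1/2)·arcsin(π·(s−r)/(1−2δ_r)) < (π/2)·∫_r^s dτ/(1−2δ_τ). -/
open MeasureTheory

/-- `δ_τ = τ · tan((1/2)·arctan(2τ))`. -/
noncomputable def delta (t : ℝ) : ℝ := t * Real.tan ((1/2) * Real.arctan (2*t))

lemma one_sub_two_delta (t : ℝ) : 1 - 2 * delta t = 2 - Real.sqrt (1 + 4*t^2) := by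
  unfold delta
  set θ := Real.arctan (2*t) with hθ
  have hθmem := Real.arctan_mem_Ioo (2*t)
  have hc2 : 0 < Real.cos (θ/2) := by
    apply Real.cos_pos_of_mem_Ioo
    constructor <;> [nlinarith [hθmem.1, Real.pi_pos]; nlinarith [hθmem.2, Real.pi_pos]]
  have hSpos : (0:ℝ) < Real.sqrt (1 + (2*t)^2) := Real.sqrt_pos.2 (by positivity)
  have hS2 : Real.sqrt (1 + (2*t)^2) ^ 2 = 1 + (2*t)^2 := Real.sq_sqrt (by positivity)
  have hcosθ : Real.cos θ = 1 / Real.sqrt (1 + (2*t)^2) := Real.cos_arctan (2*t)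
  have hsinθ : Real.sin θ = (2*t) / Real.sqrt (1 + (2*t)^2) := Real.sin_arctan (2*t)
  have htan : Real.tan ((1/2) * θ) = Real.sin θ / (1 + Real.cos θ) := by
    have hs : Real.sin θ = 2 * Real.sin (θ/2) * Real.cos (θ/2) := by
      rw [← Real.sin_two_mul]; ring_nf
    have hcc : 1 + Real.cos θ = 2 * Real.cos (θ/2)^2 := by
      have h := Real.cos_sq (θ/2)
      rw [show 2*(θ/2) = θ by ring] at h
      linarith
    rw [show (1/2:ℝ) * θ = θ/2 by ring, Real.tan_eq_sin_div_cos, hs, hcc]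
    field_simp
  rw [htan, hsinθ, hcosθ]
  have hS1 : (0:ℝ) < 1 + 1 / Real.sqrt (1 + (2*t)^2) := by positivity
  have h4 : (1:ℝ) + (2*t)^2 = 1 + 4*t^2 := by ring
  rw [← h4]
  field_simp
  nlinarith [hS2, hSpos, Real.sq_sqrt (show (0:ℝ) ≤ 1 + 2^2*t^2 by positivity)]

lemma arctan_le_self' {y : ℝ} (hy : 0 ≤ y) : Real.arctan y ≤ y := by
  have h := Real.le_tan (x := Real.arctan y) (by rw [← Real.arctan_zero]; exact Real.arctan_strictMono.monotone hy)
    (Real.arctan_lt_pi_div_two y)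
  rwa [Real.tan_arctan] at h

lemma arcsin_le_cubic {x : ℝ} (h0 : 0 ≤ x) (h1 : x ≤ 1/2) :
    Real.arcsin x ≤ x + x^3 := by
  have hx1 : x < 1 := lt_of_le_of_lt h1 (by norm_num)
  rw [Real.arcsin_eq_arctan ⟨by linarith, hx1⟩]
  set u := Real.sqrt (1 - x^2) with hu
  have hu2 : u^2 = 1 - x^2 := Real.sq_sqrt (by nlinarith)
  have hu0 : 0 < u := Real.sqrt_pos.2 (by nlinarith)
  have hx2 : x^2 ≤ 1/4 := by nlinarith
  have hPsq : 1 ≤ (u * (1 + x^2))^2 := by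
    have he : (u*(1+x^2))^2 = (1-x^2)*(1+x^2)^2 := by rw [mul_pow, hu2]
    rw [he]
    nlinarith [sq_nonneg x, sq_nonneg (x^2), mul_nonneg (sq_nonneg x) (sq_nonneg x)]
  have hP : 1 ≤ u * (1 + x^2) := by
    nlinarith [hPsq, mul_pos hu0 (show (0:ℝ) < 1 + x^2 by positivity)]
  have h2 : x / u ≤ x + x^3 := by
    rw [div_le_iff₀ hu0]
    nlinarith [mul_le_mul_of_nonneg_left hP h0]
  exact le_trans (arctan_le_self' (by positivity)) h2

lemma denom_pos {t : ℝ} (h0 : 0 ≤ t) (ht : t < Real.sqrt 3 / 2) :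
    0 < 2 - Real.sqrt (1 + 4*t^2) := by
  have h3 : Real.sqrt 3 ^ 2 = 3 := Real.sq_sqrt (by norm_num)
  have h4 : 1 + 4*t^2 < 4 := by nlinarith [Real.sqrt_nonneg 3]
  have := Real.sqrt_lt_sqrt (by positivity) h4
  have h44 : Real.sqrt 4 = 2 := by
    rw [show (4:ℝ) = 2^2 by norm_num, Real.sqrt_sq (by norm_num)]
  linarith [this, h44 ▸ this]

lemma pointwise_bound {r τ : ℝ} (hr : 0 < r) (hτ1 : r ≤ τ) (hτ2 : τ < Real.sqrt 3 / 2) :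
    1/(2 - Real.sqrt (1+4*r^2)) + (2*r/(2 - Real.sqrt (1+4*r^2))^2)*(τ - r)
      ≤ 1/(2 - Real.sqrt (1+4*τ^2)) := by
  set A := Real.sqrt (1+4*r^2) with hA
  set B := Real.sqrt (1+4*τ^2) with hB
  have hA2 : A^2 = 1+4*r^2 := Real.sq_sqrt (by positivity)
  have hB2 : B^2 = 1+4*τ^2 := Real.sq_sqrt (by positivity)
  have hBA : A ≤ B := Real.sqrt_le_sqrt (by nlinarith)
  have hcB : 0 < 2 - B := denom_pos (by linarith) hτ2
  have hcA : 0 < 2 - A := by linarith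
  have h1 : 2*r*(τ - r) ≤ B - A := by
    nlinarith [mul_nonneg (sub_nonneg.2 hBA) (show (0:ℝ) ≤ 4 - A - B by linarith),
      sq_nonneg (τ - r)]
  have h2 : (2-B)*(2-A) ≤ (2-A)^2 := by nlinarith
  have e : 1/(2-B) - 1/(2-A) = (B - A)/((2-B)*(2-A)) := by
    field_simp
    ring
  have h : (2*r/(2-A)^2)*(τ-r) ≤ (B-A)/((2-B)*(2-A)) := by
    rw [div_mul_eq_mul_div, div_le_div_iff₀ (by positivity) (by positivity)]
    nlinarith [mul_le_mul_of_nonneg_right h1 (sq_nonneg (2-A)),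
      mul_le_mul_of_nonneg_left h2 (mul_nonneg (show (0:ℝ) ≤ 2*r by linarith) (sub_nonneg.2 hτ1))]
  linarith


lemma integral_lower {r s : ℝ} (hr : 0 < r) (hs : r < s) (hs' : s < Real.sqrt 3 / 2) :
    (s-r)/(2 - Real.sqrt (1+4*r^2)) + (2*r/(2 - Real.sqrt (1+4*r^2))^2)*((s-r)^2/2)
      ≤ ∫ τ in r..s, 1/(2 - Real.sqrt (1+4*τ^2)) := by
  set c1 := 1/(2 - Real.sqrt (1+4*r^2)) with hc1
  set c2 := 2*r/(2 - Real.sqrt (1+4*r^2))^2 with hc2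
  have hgc : Continuous (fun τ : ℝ => c1 + c2*(τ - r)) :=
    continuous_const.add (continuous_const.mul (continuous_id.sub continuous_const))
  have hfint : IntervalIntegrable (fun τ => 1/(2 - Real.sqrt (1+4*τ^2)))
      MeasureTheory.volume r s := by
    apply ContinuousOn.intervalIntegrable
    apply ContinuousOn.div continuousOn_const
    · exact (continuous_const.sub (Real.continuous_sqrt.comp (by continuity))).continuousOn
    · intro τ hτ
      rw [Set.uIcc_of_le hs.le] at hτ
      exact (denom_pos (le_trans hr.le hτ.1) (lt_of_le_of_lt hτ.2 hs')).ne'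
  have hmono := intervalIntegral.integral_mono_on hs.le (hgc.intervalIntegrable r s) hfint
    (fun τ hτ => pointwise_bound hr hτ.1 (lt_of_le_of_lt hτ.2 hs'))
  have hder : ∀ τ ∈ Set.uIcc r s,
      HasDerivAt (fun t => c1*t + (c2/2)*(t-r)^2) (c1 + c2*(τ-r)) τ := by
    intro τ _
    have h1 : HasDerivAt (fun t : ℝ => c1*t) c1 τ := by
      simpa using (hasDerivAt_id τ).const_mul c1
    have h2 : HasDerivAt (fun t : ℝ => (c2/2)*(t-r)^2) (c2*(τ-r)) τ := by
      have h := (((hasDerivAt_id τ).sub_const r).pow 2).const_mul (c2/2)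
      exact h.congr_deriv (by simp; ring)
    exact h1.add h2
  have heval : (∫ τ in r..s, (c1 + c2*(τ - r)))
      = (s-r)*c1 + c2*((s-r)^2/2) := by
    rw [intervalIntegral.integral_eq_sub_of_hasDerivAt hder (hgc.intervalIntegrable r s)]
    ring
  rw [heval] at hmono
  calc (s-r)/(2 - Real.sqrt (1+4*r^2)) + (2*r/(2 - Real.sqrt (1+4*r^2))^2)*((s-r)^2/2)
      = (s-r)*c1 + c2*((s-r)^2/2) := by rw [hc1, hc2]; ring
    _ ≤ _ := hmono



theorem arcsin_bound_locally_beats_integral_bound (r : ℝ) (hr : 0 < r)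
    (hr' : r < Real.sqrt 3 / 2) :
    ∃ ε > 0, ε ≤ (1 - 2 * delta r) / Real.pi ∧ r + ε < Real.sqrt 3 / 2 ∧
      ∀ s, r < s → s ≤ r + ε →
        (1/2) * Real.arcsin (Real.pi * (s - r) / (1 - 2 * delta r)) <
          (Real.pi/2) * (∫ τ in r..s, 1/(1 - 2 * delta τ)) := by
  simp only [one_sub_two_delta]
  have hπ := Real.pi_pos
  have hc : 0 < 2 - Real.sqrt (1 + 4*r^2) := denom_pos hr.le hr'
  set c := 2 - Real.sqrt (1 + 4*r^2) with hcdef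
  set ε := min ((Real.sqrt 3/2 - r)/2) (min (c/(2*Real.pi)) (r*c/(4*Real.pi^2))) with hε
  have hε0 : 0 < ε := by
    apply lt_min (by linarith)
    exact lt_min (by positivity) (by positivity)
  have hεa : ε ≤ (Real.sqrt 3/2 - r)/2 := min_le_left _ _
  have hεb : ε ≤ c/(2*Real.pi) := le_trans (min_le_right _ _) (min_le_left _ _)
  have hεc : ε ≤ r*c/(4*Real.pi^2) := le_trans (min_le_right _ _) (min_le_right _ _)
  have hrε : r + ε < Real.sqrt 3 / 2 := by linarith
  clear_value c ε
  refine ⟨ε, hε0, ?_, hrε, ?_⟩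
  · calc ε ≤ c/(2*Real.pi) := hεb
      _ ≤ c/Real.pi := by
        rw [div_le_div_iff₀ (by positivity) (by positivity)]
        nlinarith
  · intro s hs1 hs2
    have hΔ0 : 0 < s - r := by linarith
    have hΔε : s - r ≤ ε := by linarith
    have hs' : s < Real.sqrt 3 / 2 := by linarith
    set Δ := s - r with hΔ
    set X := Real.pi * Δ / c with hX
    clear_value Δ X
    have hX0 : 0 < X := by rw [hX]; exact div_pos (mul_pos hπ hΔ0) hc
    have hXhalf : X ≤ 1/2 := by
      rw [hX, div_le_iff₀ hc]
      have : Real.pi * Δ ≤ Real.pi * (c/(2*Real.pi)) :=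
        mul_le_mul_of_nonneg_left (le_trans hΔε hεb) hπ.le
      calc Real.pi * Δ ≤ Real.pi * (c/(2*Real.pi)) := this
        _ = 1/2 * c := by field_simp
    have harcsin : Real.arcsin X ≤ X + X^3 := arcsin_le_cubic hX0.le hXhalf
    have hint := integral_lower hr hs1 hs'
    rw [← hΔ, ← hcdef] at hint
    -- key cubic estimate : X^3 < (π/2) * (2r/c^2) * (Δ^2/2)
    have hkey : X^3 < Real.pi/2 * ((2*r/c^2)*(Δ^2/2)) := by
      have hXc : X^3 = Real.pi^3 * Δ^3 / c^3 := by rw [hX]; field_simp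
      rw [hXc]
      have h1 : Real.pi/2 * ((2*r/c^2)*(Δ^2/2)) = Real.pi*r*Δ^2/(2*c^2) := by
        field_simp
      rw [h1, div_lt_div_iff₀ (by positivity) (by positivity)]
      have hΔsmall : Δ ≤ r*c/(4*Real.pi^2) := le_trans hΔε hεc
      have hΔsmall' : Δ * (4*Real.pi^2) ≤ r*c := by
        rwa [le_div_iff₀ (by positivity)] at hΔsmall
      have hmul := mul_le_mul_of_nonneg_left hΔsmall'
        (show (0:ℝ) ≤ Real.pi*Δ^2*c^2/2 by positivity)
      have hpos : 0 < Real.pi*r*Δ^2*c^3/2 := by positivity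
      nlinarith [hmul, hpos]
    have e1 : Real.pi/2 * (Δ/c) = X/2 := by rw [hX]; ring
    calc (1/2) * Real.arcsin X ≤ (1/2) * (X + X^3) := by linarith
      _ < Real.pi/2 * (Δ/c + (2*r/c^2)*(Δ^2/2)) := by
          have e2 : Real.pi/2 * (Δ/c + (2*r/c^2)*(Δ^2/2))
              = X/2 + Real.pi/2 * ((2*r/c^2)*(Δ^2/2)) := by rw [hX]; ring
          rw [e2]; nlinarith [hkey, pow_pos hX0 3]
      _ ≤ Real.pi/2 * (∫ τ in r..s, 1/(2 - Real.sqrt (1+4*τ^2))) := by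
          apply mul_le_mul_of_nonneg_left _ (by positivity)
          calc Δ/c + (2*r/c^2)*(Δ^2/2) = Δ/c + (2*r/c^2)*(Δ^2/2) := rfl
            _ ≤ _ := hint
end

section
/- Fix t ∈ (0, √3/2) and let c_off ∈ (0, √3/2) be the unique number with ∫₀^{c_off} dτ/(1−2δ_τ) = 1. Call a finite partition 0 = t₀ < t₁ < … < t_{n+1} = t of [0,t] (n ∈ ℕ₀) admissible if, setting λ_j := (t_{j+1} − t_j)/(1 − 2δ_{t_j}) for j = 0,…,n, one has λ₀ = t₁ ≤ c_off and λ_j ≤ 1/π for j = 1,…,n, and assign to it the value F := (π/2)·∫₀^{λ₀} dτ/(1−2δ_τ) + (1/2)·Σ_{j=1}^{n} arcsin(πλ_j). Then for every admissible partition of [0,t] there exists another admissible partition of [0,t] with strictly smaller value F; in particular, no admissible finite partition minimizes F. -/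
open MeasureTheory

/-- A finite partition `0 = t₀ < t₁ < … < t_{n+1} = T` of `[0, T]` is admissible if
`λ₀ = t₁ ≤ c_off` and `λ_j = (t_{j+1} − t_j)/(1 − 2δ_{t_j}) ≤ 1/π` for `j = 1, …, n`. -/
def Admissible (coff T : ℝ) (n : ℕ) (t : Fin (n+2) → ℝ) : Prop :=
  StrictMono t ∧ t 0 = 0 ∧ t (Fin.last (n+1)) = T ∧ t 1 ≤ coff ∧
    ∀ j : Fin (n+1), j ≠ 0 →
      (t j.succ - t j.castSucc) / (1 - 2 * delta (t j.castSucc)) ≤ 1/Real.pi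

/-- The value `F = (π/2)·∫₀^{λ₀} dτ/(1−2δ_τ) + (1/2)·Σ_{j=1}^n arcsin(πλ_j)`
assigned to a partition (note `λ₀ = t₁`). -/
noncomputable def valF (n : ℕ) (t : Fin (n+2) → ℝ) : ℝ :=
  (Real.pi/2) * (∫ τ in (0:ℝ)..(t 1), 1/(1 - 2 * delta τ)) +
    (1/2) * ∑ j ∈ Finset.univ.filter (fun j : Fin (n+1) => j ≠ 0),
      Real.arcsin (Real.pi * (t j.succ - t j.castSucc) / (1 - 2 * delta (t j.castSucc)))

lemma delta_eq (τ : ℝ) : delta τ = (Real.sqrt (1+4*τ^2) - 1)/2 := by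
  have h4 : (0:ℝ) ≤ 1 + 4*τ^2 := by positivity
  set S := Real.sqrt (1 + 4*τ^2) with hS
  have hS1 : 1 ≤ S := Real.one_le_sqrt.mpr (by nlinarith)
  have hSsq : S^2 = 1 + 4*τ^2 := Real.sq_sqrt h4
  set θ := Real.arctan (2*τ) with hθ
  have hmem := Real.arctan_mem_Ioo (2*τ)
  have hcos : Real.cos (θ/2) > 0 := by
    apply Real.cos_pos_of_mem_Ioo
    constructor
    · have := hmem.1; linarith [Real.pi_pos]
    · have := hmem.2; linarith [Real.pi_pos]
  have hsin : Real.sin θ = 2*τ / S := by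
    rw [hθ, Real.sin_arctan]; norm_num [hS]; ring_nf
  have hcosθ : Real.cos θ = 1 / S := by
    rw [hθ, Real.cos_arctan]; norm_num [hS]; ring_nf
  have htan : Real.tan (θ/2) = Real.sin θ / (1 + Real.cos θ) := by
    have h2 : θ = 2 * (θ/2) := by ring
    rw [Real.tan_eq_sin_div_cos]
    rw [h2, Real.sin_two_mul, Real.cos_two_mul]
    field_simp
    ring
  have hSpos : 0 < S := by linarith
  have hd : delta τ = τ * (Real.sin θ / (1 + Real.cos θ)) := by
    rw [delta, show (1/2) * Real.arctan (2*τ) = θ/2 by rw [hθ]; ring, htan]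
  rw [hd, hsin, hcosθ]
  have h1S : 1 + 1/S ≠ 0 := by positivity
  field_simp
  nlinarith [hSsq]

lemma oneSub_eq (τ : ℝ) : 1 - 2*delta τ = 2 - Real.sqrt (1+4*τ^2) := by
  rw [delta_eq]; ring

lemma sqrt_facts {τ : ℝ} (h0 : 0 ≤ τ) (h : τ < Real.sqrt 3/2) :
    1 ≤ Real.sqrt (1+4*τ^2) ∧ Real.sqrt (1+4*τ^2) < 2 := by
  constructor
  · exact Real.one_le_sqrt.mpr (by nlinarith)
  · have h3 : τ^2 < 3/4 := by
      nlinarith [Real.sq_sqrt (by norm_num : (0:ℝ) ≤ 3), Real.sqrt_nonneg 3]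
    exact (Real.sqrt_lt' (by norm_num)).mpr (by nlinarith)

lemma oneSub_pos {τ : ℝ} (h0 : 0 ≤ τ) (h : τ < Real.sqrt 3/2) : 0 < 1 - 2*delta τ := by
  rw [oneSub_eq]; linarith [(sqrt_facts h0 h).2]

lemma oneSub_le_one {τ : ℝ} : 1 - 2*delta τ ≤ 1 := by
  rw [oneSub_eq]
  have : 1 ≤ Real.sqrt (1+4*τ^2) := Real.one_le_sqrt.mpr (by nlinarith)
  linarith

lemma g_incr {a b : ℝ} (h0 : 0 ≤ a) (hab : a ≤ b) (hb : b < Real.sqrt 3/2) :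
    a*(b-a) + 1/(1 - 2*delta a) ≤ 1/(1 - 2*delta b) := by
  have ha : a < Real.sqrt 3/2 := lt_of_le_of_lt hab hb
  have hb0 : 0 ≤ b := le_trans h0 hab
  rw [oneSub_eq, oneSub_eq]
  obtain ⟨ha1, ha2⟩ := sqrt_facts h0 ha
  obtain ⟨hb1, hb2⟩ := sqrt_facts hb0 hb
  set Sa := Real.sqrt (1+4*a^2)
  set Sb := Real.sqrt (1+4*b^2)
  have hSa : Sa^2 = 1+4*a^2 := Real.sq_sqrt (by positivity)
  have hSb : Sb^2 = 1+4*b^2 := Real.sq_sqrt (by positivity)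
  have hle : Sa ≤ Sb := Real.sqrt_le_sqrt (by nlinarith)
  have hA : 0 < 2 - Sa := by linarith
  have hB : 0 < 2 - Sb := by linarith
  have key : 1/(2-Sb) - 1/(2-Sa) = (Sb-Sa)/((2-Sb)*(2-Sa)) := by
    field_simp
    ring
  have h1 : Sb - Sa ≤ (Sb-Sa)/((2-Sb)*(2-Sa)) := by
    have hprod : (2-Sb)*(2-Sa) ≤ 1 := by nlinarith
    rw [le_div_iff₀ (by positivity)]
    nlinarith [mul_nonneg (sub_nonneg.mpr hle) (sub_nonneg.mpr hprod)]
  have h2 : a*(b-a) ≤ Sb - Sa := by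
    nlinarith [sub_nonneg.mpr hle, mul_nonneg hb0 (sub_nonneg.mpr hab)]
  linarith

lemma g_mono {a b : ℝ} (h0 : 0 ≤ a) (hab : a ≤ b) (hb : b < Real.sqrt 3/2) :
    1/(1 - 2*delta a) ≤ 1/(1 - 2*delta b) := by
  have := g_incr h0 hab hb
  nlinarith [mul_nonneg h0 (sub_nonneg.mpr hab)]

lemma g_ge_one {τ : ℝ} (h0 : 0 ≤ τ) (h : τ < Real.sqrt 3/2) : 1 ≤ 1/(1 - 2*delta τ) := by
  have hp := oneSub_pos h0 h
  rw [le_div_iff₀ hp]; linarith [@oneSub_le_one τ]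

lemma arcsin_lt_cube {x : ℝ} (hx : 0 < x) (hx2 : x ≤ 1/2) :
    Real.arcsin x < x + x^3 := by
  have hx3 : x^3 ≤ (1/2)^3 := pow_le_pow_left₀ hx.le hx2 3
  have h1 : x + x^3 ≤ 1 := by norm_num at hx3; linarith
  have hsin := Real.sin_gt_sub_cube (by positivity : 0 < x + x^3)
  have hxx : x^2 ≤ 1/4 := by nlinarith
  have p3 : (0:ℝ) < x^3 := pow_pos hx 3
  have h5 : x^5 ≤ x^3/4 := by nlinarith [mul_le_mul_of_nonneg_left hxx p3.le]
  have h7 : x^7 ≤ x^5/4 := by nlinarith [mul_le_mul_of_nonneg_left hxx (pow_pos hx 5).le]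
  have h9 : x^9 ≤ x^7/4 := by nlinarith [mul_le_mul_of_nonneg_left hxx (pow_pos hx 7).le]
  have hcube : (x+x^3)^3 ≤ 4*x^3 := by nlinarith [p3, h5, h7, h9]
  have hy : x < Real.sin (x + x^3) := by nlinarith
  have hpi : x + x^3 ≤ Real.pi/2 := by nlinarith [Real.pi_gt_three]
  have hlow : -(Real.pi/2) ≤ x + x^3 := by nlinarith [Real.pi_pos, pow_pos hx 3]
  calc Real.arcsin x < Real.arcsin (Real.sin (x+x^3)) := by
        apply Real.strictMonoOn_arcsin ⟨by linarith, by linarith⟩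
          ⟨Real.neg_one_le_sin _, Real.sin_le_one _⟩ hy
    _ = x + x^3 := Real.arcsin_sin hlow hpi

lemma g_contOn {a b : ℝ} (h0 : 0 ≤ a) (hb : b < Real.sqrt 3/2) (hab : a ≤ b) :
    ContinuousOn (fun τ => 1/(1 - 2*delta τ)) (Set.uIcc a b) := by
  have heq : (fun τ : ℝ => 1/(1 - 2*delta τ)) = fun τ => 1/(2 - Real.sqrt (1+4*τ^2)) := by
    funext τ; rw [oneSub_eq]
  rw [heq]
  apply ContinuousOn.div continuousOn_const
  · fun_prop
  · intro τ hτ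
    rw [Set.uIcc_of_le hab] at hτ
    have h1 : 0 ≤ τ := le_trans h0 hτ.1
    have h2 : τ < Real.sqrt 3/2 := lt_of_le_of_lt hτ.2 hb
    linarith [(sqrt_facts h1 h2).2]

lemma g_intble {a b : ℝ} (h0 : 0 ≤ a) (hb : b < Real.sqrt 3/2) (hab : a ≤ b) :
    IntervalIntegrable (fun τ => 1/(1 - 2*delta τ)) volume a b :=
  (g_contOn h0 hb hab).intervalIntegrable

lemma g_int_lb {a b c : ℝ} (h0 : 0 ≤ a) (hab : a ≤ b) (hb : b < Real.sqrt 3/2)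
    (hc : c ≤ 1/(1 - 2*delta a)) :
    (b - a) * c ≤ ∫ τ in a..b, 1/(1 - 2*delta τ) := by
  have h : (b-a) * c = ∫ _ in a..b, c := by rw [intervalIntegral.integral_const]; simp [smul_eq_mul]
  rw [h]
  apply intervalIntegral.integral_mono_on hab (intervalIntegrable_const) (g_intble h0 hb hab)
  intro τ hτ
  exact le_trans hc (g_mono h0 hτ.1 (lt_of_le_of_lt hτ.2 hb))

lemma key_lemma {t1 : ℝ} (h0 : 0 < t1) (h1 : t1 < Real.sqrt 3/2) :
    ∃ r, 0 < r ∧ r < t1 ∧ (t1 - r)/(1-2*delta r) ≤ 1/Real.pi ∧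
      Real.arcsin (Real.pi * (t1 - r)/(1-2*delta r)) <
        Real.pi * ∫ τ in r..t1, 1/(1 - 2*delta τ) := by
  have hπ := Real.pi_pos
  set G := 1/(1-2*delta t1) with hG
  have hG1 : 1 ≤ G := g_ge_one h0.le h1
  have hGpos : 0 < G := by linarith
  clear_value G
  set s := min (t1/2) (min (1/(2*Real.pi*G)) (t1/(8*Real.pi^2*G^3))) with hs
  have hspos : 0 < s := by
    apply lt_min (by positivity) (lt_min (by positivity) (by positivity))
  have hs1 : s ≤ t1/2 := min_le_left _ _
  have hs2 : s ≤ 1/(2*Real.pi*G) := le_trans (min_le_right _ _) (min_le_left _ _)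
  have hs3 : s ≤ t1/(8*Real.pi^2*G^3) := le_trans (min_le_right _ _) (min_le_right _ _)
  clear_value s
  set r := t1 - s with hr
  have hr0 : 0 < r := by rw [hr]; linarith
  have hrt : r < t1 := by rw [hr]; linarith
  have hrsqrt : r < Real.sqrt 3/2 := lt_trans hrt h1
  have hdenom : 0 < 1 - 2*delta r := oneSub_pos hr0.le hrsqrt
  clear_value r
  set gr := 1/(1-2*delta r) with hgr
  have hgr1 : 1 ≤ gr := g_ge_one hr0.le hrsqrt
  have hgrG : gr ≤ G := by rw [hgr, hG]; exact g_mono hr0.le hrt.le h1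
  have hgrpos : 0 < gr := by linarith
  have hlam : (t1 - r)/(1-2*delta r) = s * gr := by
    rw [hgr, hr]; field_simp; ring
  have hsgr : s * gr ≤ 1/(2*Real.pi) := by
    calc s * gr ≤ (1/(2*Real.pi*G)) * G := by
          apply mul_le_mul hs2 hgrG hgrpos.le (by positivity)
      _ = 1/(2*Real.pi) := by field_simp
  have hadm : (t1 - r)/(1-2*delta r) ≤ 1/Real.pi := by
    rw [hlam]
    calc s * gr ≤ 1/(2*Real.pi) := hsgr
      _ ≤ 1/Real.pi := by rw [div_le_div_iff₀ (by positivity) hπ]; linarith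
  clear_value gr
  refine ⟨r, hr0, hrt, hadm, ?_⟩
  set x := Real.pi * s * gr with hx
  have harg : Real.pi * (t1 - r)/(1-2*delta r) = x := by
    rw [hx, mul_div_assoc, hlam]; ring
  have hxpos : 0 < x := by rw [hx]; positivity
  have hxhalf : x ≤ 1/2 := by
    calc x = Real.pi * (s * gr) := by rw [hx]; ring
      _ ≤ Real.pi * (1/(2*Real.pi)) := by
          exact mul_le_mul_of_nonneg_left hsgr hπ.le
      _ = 1/2 := by field_simp
  clear_value x
  set m := (r + t1)/2 with hm
  clear_value m
  have hrm : r ≤ m := by rw [hm]; linarith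
  have hmt : m ≤ t1 := by rw [hm]; linarith
  have hmr : m - r = s/2 := by rw [hm, hr]; ring
  have hmsqrt : m < Real.sqrt 3/2 := lt_of_le_of_lt hmt h1
  have hI1 : (s/2) * gr ≤ ∫ τ in r..m, 1/(1 - 2*delta τ) := by
    have := g_int_lb hr0.le hrm hmsqrt hgr.le
    rwa [hmr] at this
  have hgm : gr + r*(s/2) ≤ 1/(1 - 2*delta m) := by
    have := g_incr hr0.le hrm hmsqrt
    rw [hmr] at this; rw [hgr]; linarith
  have hm0 : (0:ℝ) ≤ m := le_trans hr0.le hrm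
  have hI2 : (s/2) * (gr + r*(s/2)) ≤ ∫ τ in m..t1, 1/(1 - 2*delta τ) := by
    have h := g_int_lb hm0 hmt h1 hgm
    have ht1m : t1 - m = s/2 := by rw [hm, hr]; ring
    rwa [ht1m] at h
  have hrhalf : t1/2 ≤ r := by rw [hr]; linarith
  have e2 : gr^3 ≤ G^3 := pow_le_pow_left₀ hgrpos.le hgrG 3
  have e3 : Real.pi^2 * s * G^3 ≤ t1/8 := by
    have h8 := (le_div_iff₀ (by positivity : (0:ℝ) < 8*Real.pi^2*G^3)).mp hs3
    nlinarith
  have e4 : x^3 ≤ Real.pi * r * s^2/4 := by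
    calc x^3 = Real.pi^3 * s^3 * gr^3 := by rw [hx]; ring
      _ ≤ Real.pi^3 * s^3 * G^3 := mul_le_mul_of_nonneg_left e2 (by positivity)
      _ = Real.pi * s^2 * (Real.pi^2 * s * G^3) := by ring
      _ ≤ Real.pi * s^2 * (t1/8) := mul_le_mul_of_nonneg_left e3 (by positivity)
      _ = Real.pi * s^2/4 * (t1/2) := by ring
      _ ≤ Real.pi * s^2/4 * r := mul_le_mul_of_nonneg_left hrhalf (by positivity)
      _ = Real.pi * r * s^2/4 := by ring
  have hsplit : (∫ τ in r..t1, 1/(1 - 2*delta τ)) =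
      (∫ τ in r..m, 1/(1 - 2*delta τ)) + ∫ τ in m..t1, 1/(1 - 2*delta τ) :=
    (intervalIntegral.integral_add_adjacent_intervals
      (g_intble hr0.le hmsqrt hrm) (g_intble hm0 h1 hmt)).symm
  have hint : x + x^3 ≤ Real.pi * ∫ τ in r..t1, 1/(1 - 2*delta τ) := by
    rw [hsplit]
    have hcomb := mul_le_mul_of_nonneg_left (add_le_add hI1 hI2) hπ.le
    have hid : x + Real.pi * r * s^2/4 =
        Real.pi * ((s/2)*gr + ((s/2)*(gr + r*(s/2)))) := by rw [hx]; ring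
    calc x + x^3 ≤ x + Real.pi * r * s^2/4 := by linarith
      _ = Real.pi * ((s/2)*gr + ((s/2)*(gr + r*(s/2)))) := hid
      _ ≤ Real.pi * ((∫ τ in r..m, 1/(1 - 2*delta τ)) + ∫ τ in m..t1, 1/(1 - 2*delta τ)) :=
          hcomb
  rw [harg]
  exact lt_of_lt_of_le (arcsin_lt_cube hxpos hxhalf) hint

lemma sum_ne_zero_eq {n : ℕ} (f : Fin (n+1) → ℝ) :
    ∑ j ∈ Finset.univ.filter (fun j : Fin (n+1) => j ≠ 0), f j = ∑ j : Fin n, f j.succ := by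
  rw [Finset.filter_ne', Finset.sum_erase_eq_sub (Finset.mem_univ 0), Fin.sum_univ_succ]
  ring

/-- the partition obtained by inserting `r` between `t 0 = 0` and `t 1`. -/
noncomputable def ins (n : ℕ) (t : Fin (n+2) → ℝ) (r : ℝ) : Fin (n+3) → ℝ :=
  Fin.cons 0 (Fin.cons r (fun j : Fin (n+1) => t j.succ))

lemma ins_zero (n : ℕ) (t : Fin (n+2) → ℝ) (r : ℝ) : ins n t r 0 = 0 := rfl

lemma ins_one (n : ℕ) (t : Fin (n+2) → ℝ) (r : ℝ) : ins n t r 1 = r := by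
  rw [show (1 : Fin (n+3)) = (0 : Fin (n+2)).succ from rfl, ins, Fin.cons_succ, Fin.cons_zero]

lemma ins_succ_succ (n : ℕ) (t : Fin (n+2) → ℝ) (r : ℝ) (j : Fin (n+1)) :
    ins n t r j.succ.succ = t j.succ := by
  rw [ins, Fin.cons_succ, Fin.cons_succ]

lemma ins_one_succ (n : ℕ) (t : Fin (n+2) → ℝ) (r : ℝ) :
    ins n t r ((0 : Fin (n+1)).succ).succ = t 1 := by
  rw [ins_succ_succ, Fin.succ_zero_eq_one]

lemma ins_cs_zero (n : ℕ) (t : Fin (n+2) → ℝ) (r : ℝ) :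
    ins n t r ((0 : Fin (n+1)).succ).castSucc = r := by
  rw [← Fin.succ_castSucc, ins, Fin.cons_succ, Fin.castSucc_zero, Fin.cons_zero]

lemma ins_cs_succ (n : ℕ) (t : Fin (n+2) → ℝ) (r : ℝ) (l : Fin n) :
    ins n t r ((l.succ).succ).castSucc = t (l.succ).castSucc := by
  rw [← Fin.succ_castSucc, ins, Fin.cons_succ, ← Fin.succ_castSucc, Fin.cons_succ,
    Fin.succ_castSucc]

theorem no_minimizing_partition (T coff : ℝ) (hT : T ∈ Set.Ioo 0 (Real.sqrt 3 / 2))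
    (hcoff : coff ∈ Set.Ioo 0 (Real.sqrt 3 / 2))
    (hcoff' : (∫ τ in (0:ℝ)..coff, 1/(1 - 2 * delta τ)) = 1)
    (hcoffu : ∀ c ∈ Set.Ioo 0 (Real.sqrt 3 / 2),
      (∫ τ in (0:ℝ)..c, 1/(1 - 2 * delta τ)) = 1 → c = coff) :
    (∀ (n : ℕ) (t : Fin (n+2) → ℝ), Admissible coff T n t →
      ∃ (m : ℕ) (u : Fin (m+2) → ℝ), Admissible coff T m u ∧ valF m u < valF n t) ∧
    ¬ ∃ (n : ℕ) (t : Fin (n+2) → ℝ), Admissible coff T n t ∧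
      ∀ (m : ℕ) (u : Fin (m+2) → ℝ), Admissible coff T m u → valF n t ≤ valF m u := by
  have main : ∀ (n : ℕ) (t : Fin (n+2) → ℝ), Admissible coff T n t →
      ∃ (m : ℕ) (u : Fin (m+2) → ℝ), Admissible coff T m u ∧ valF m u < valF n t := by
    intro n t ht
    obtain ⟨hmono, ht0, htlast, htcoff, hlamt⟩ := ht
    have t1pos : 0 < t 1 := by
      rw [← ht0]
      exact hmono (by exact Fin.zero_lt_one)
    have t1leT : t 1 ≤ T := by
      rw [← htlast]; exact hmono.monotone (Fin.le_last _)
    have t1lt : t 1 < Real.sqrt 3 / 2 := lt_of_le_of_lt t1leT hT.2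
    obtain ⟨r, hr0, hrt1, hradm, hrkey⟩ := key_lemma t1pos t1lt
    refine ⟨n+1, ins n t r, ⟨?_, ins_zero n t r, ?_, ?_, ?_⟩, ?_⟩
    · -- strict mono
      rw [Fin.strictMono_iff_lt_succ]
      intro i
      rcases Fin.eq_zero_or_eq_succ i with rfl | ⟨k, rfl⟩
      · rw [Fin.castSucc_zero, ins_zero, show (0 : Fin (n+2)).succ = 1 from rfl, ins_one]
        exact hr0
      · rcases Fin.eq_zero_or_eq_succ k with rfl | ⟨l, rfl⟩
        · rw [ins_cs_zero, ins_one_succ]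
          exact hrt1
        · rw [ins_cs_succ, ins_succ_succ]
          exact hmono Fin.castSucc_lt_succ
    · -- last
      rw [show (Fin.last (n+2) : Fin (n+3)) = ((Fin.last n).succ : Fin (n+2)).succ by
            rw [Fin.succ_last, Fin.succ_last],
          ins_succ_succ, Fin.succ_last]
      exact htlast
    · -- u 1 ≤ coff
      rw [ins_one]; exact le_trans (le_of_lt hrt1) htcoff
    · -- lambda conditions
      intro j hj
      rcases Fin.eq_zero_or_eq_succ j with rfl | ⟨k, rfl⟩
      · exact absurd rfl hj
      · rcases Fin.eq_zero_or_eq_succ k with rfl | ⟨l, rfl⟩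
        · rw [ins_one_succ, ins_cs_zero]
          exact hradm
        · rw [ins_succ_succ, ins_cs_succ]
          exact hlamt l.succ (Fin.succ_ne_zero l)
    · -- value comparison
      have hrlt : r < Real.sqrt 3/2 := lt_trans hrt1 t1lt
      have hsplit : (∫ τ in (0:ℝ)..(t 1), 1/(1 - 2*delta τ)) =
          (∫ τ in (0:ℝ)..r, 1/(1 - 2*delta τ)) + ∫ τ in r..(t 1), 1/(1 - 2*delta τ) :=
        (intervalIntegral.integral_add_adjacent_intervals
          (g_intble le_rfl hrlt hr0.le) (g_intble hr0.le t1lt hrt1.le)).symm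
      have hsum : ∑ j ∈ Finset.univ.filter (fun j : Fin (n+2) => j ≠ 0),
          Real.arcsin (Real.pi * (ins n t r j.succ - ins n t r j.castSucc) /
            (1 - 2*delta (ins n t r j.castSucc)))
          = Real.arcsin (Real.pi * (t 1 - r)/(1 - 2*delta r)) +
            ∑ j ∈ Finset.univ.filter (fun j : Fin (n+1) => j ≠ 0),
              Real.arcsin (Real.pi * (t j.succ - t j.castSucc) /
                (1 - 2*delta (t j.castSucc))) := by
        rw [sum_ne_zero_eq, sum_ne_zero_eq, Fin.sum_univ_succ, ins_one_succ, ins_cs_zero]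
        congr 1
      rw [valF, valF, hsum, ins_one, hsplit]
      have : Real.arcsin (Real.pi * (t 1 - r)/(1 - 2*delta r)) <
          Real.pi * ∫ τ in r..(t 1), 1/(1 - 2*delta τ) := hrkey
      linarith [this]
  refine ⟨main, ?_⟩
  rintro ⟨n, t, ht, hmin⟩
  obtain ⟨m, u, hu, hlt⟩ := main n t ht
  exact absurd (hmin m u hu) (not_le.mpr hlt)
end
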